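/- Fix k ≥ 1. Let f(n) be the number of functions c : Fin n → {Empty, Blue, Red} such that any two distinct indices i < j with j - i ≤ k are not both non-Empty. Then f(n) = 2n + 1 for all n ≤ k, and f(n) = f(n-1) + 2·f(n-k-1) for all n > k. -/

import Mathlib

inductive Color : Type
  | Empty | Blue | Red
  deriving DecidableEq

instance : Fintype Color where
  elems := {Color.Empty, Color.Blue, Color.Red}
  complete := by intro x; cases x <;> simp

/-- Number of EnCis(k) positions on the path `P_n`: colorings where any two
colored (non-`Empty`) vertices are at distance greater than `k`. -/
def enCisPath (k n : ℕ) : ℕ :=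
  Fintype.card {c : Fin n → Color //
    ∀ i j : Fin n, i < j → (j : ℕ) - (i : ℕ) ≤ k →
      ¬(c i ≠ Color.Empty ∧ c j ≠ Color.Empty)}

namespace EnCisAux

def colorOf (b : Bool) : Color := if b then .Blue else .Red

lemma colorOf_ne_empty (b : Bool) : colorOf b ≠ Color.Empty := by
  cases b <;> simp [colorOf]

def decodeColor (c : Color) : Bool := c = Color.Blue

lemma decode_colorOf (b : Bool) : decodeColor (colorOf b) = b := by
  cases b <;> simp [colorOf, decodeColor]

lemma colorOf_decode (c : Color) (h : c ≠ Color.Empty) : colorOf (decodeColor c) = c := by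
  cases c <;> simp_all [colorOf, decodeColor]

abbrev Valid (k n : ℕ) (c : Fin n → Color) : Prop :=
  ∀ i j : Fin n, i < j → (j : ℕ) - (i : ℕ) ≤ k →
    ¬(c i ≠ Color.Empty ∧ c j ≠ Color.Empty)

lemma enCisPath_eq (k n : ℕ) :
    enCisPath k n = Fintype.card {c : Fin n → Color // Valid k n c} := rfl

/-! ### Small case -/

def smallInv (k n : ℕ) (o : Option (Fin n × Bool)) : {c : Fin n → Color // Valid k n c} :=
  match o with
  | none => ⟨fun _ => .Empty, by intro i j _ _ h; exact h.1 rfl⟩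
  | some (i, b) =>
    ⟨Function.update (fun _ => Color.Empty) i (colorOf b), by
      intro i' j' hlt _ h
      have h1 : i' = i := by
        by_contra hne
        exact h.1 (by simp [Function.update_apply, hne])
      have h2 : j' = i := by
        by_contra hne
        exact h.2 (by simp [Function.update_apply, hne])
      exact absurd (h1 ▸ h2 ▸ hlt) (lt_irrefl _)⟩

lemma smallInv_bij (k n : ℕ) (hn : n ≤ k) : Function.Bijective (smallInv k n) := by
  constructor
  · rintro (⟨⟩ | ⟨i, b⟩) (⟨⟩ | ⟨i', b'⟩) h <;>
      simp only [smallInv, Subtype.mk.injEq] at h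
    · rfl
    · have := congrFun h i'
      simp [Function.update_apply] at this
      exact absurd this.symm (colorOf_ne_empty b')
    · have := congrFun h i
      simp [Function.update_apply] at this
      exact absurd this (colorOf_ne_empty b)
    · have hii : i = i' := by
        by_contra hne
        have := congrFun h i
        simp [Function.update_apply, hne] at this
        exact colorOf_ne_empty b this
      subst hii
      have := congrFun h i
      simp [Function.update_apply] at this
      have hb : b = b' := by
        cases b <;> cases b' <;> simp_all [colorOf]
      rw [hb]
  · rintro ⟨c, hc⟩
    by_cases hE : ∀ i, c i = Color.Empty
    · refine ⟨none, ?_⟩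
      simp only [smallInv, Subtype.mk.injEq]
      funext i; exact (hE i).symm
    · push_neg at hE
      obtain ⟨i, hi⟩ := hE
      refine ⟨some (i, decodeColor (c i)), ?_⟩
      simp only [smallInv, Subtype.mk.injEq]
      funext j
      by_cases hji : j = i
      · subst hji; simp [Function.update_apply, colorOf_decode _ hi]
      · have hcj : c j = Color.Empty := by
          by_contra hj
          have hne : (j : Fin n) ≠ i := hji
          rcases lt_or_gt_of_ne hne with hij | hij
          · exact hc j i hij (by have := i.isLt; omega) ⟨hj, hi⟩
          · exact hc i j hij (by have := j.isLt; omega) ⟨hi, hj⟩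
        simp [Function.update_apply, hji, hcj]

lemma part1 (k n : ℕ) (hn : n ≤ k) : enCisPath k n = 2 * n + 1 := by
  have h := Fintype.card_congr (Equiv.ofBijective _ (smallInv_bij k n hn))
  simp only [Fintype.card_option, Fintype.card_prod, Fintype.card_fin,
    Fintype.card_bool] at h
  rw [enCisPath_eq, ← h]
  omega

/-! ### Recursion -/

def extendMap (k m : ℕ) (b : Bool) (c : Fin m → Color) : Fin (m + k + 1) → Color :=
  fun i => if h : (i : ℕ) < m then c ⟨i, h⟩
    else if (i : ℕ) = m + k then colorOf b else .Empty

lemma extendMap_valid (k m : ℕ) (b : Bool) (c : Fin m → Color) (hc : Valid k m c) :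
    Valid k (m + k + 1) (extendMap k m b c) := by
  intro i j hlt hle h
  have hj := j.isLt
  have hi := i.isLt
  have hlt' : (i : ℕ) < (j : ℕ) := hlt
  by_cases hjm : (j : ℕ) < m
  · have him : (i : ℕ) < m := by omega
    refine hc ⟨i, him⟩ ⟨j, hjm⟩ hlt' hle ⟨?_, ?_⟩
    · have := h.1; simpa [extendMap, him] using this
    · have := h.2; simpa [extendMap, hjm] using this
  · by_cases hjk : (j : ℕ) = m + k
    · have him : ¬ (i : ℕ) < m := by omega
      have hik : (i : ℕ) ≠ m + k := by omega
      exact h.1 (by simp [extendMap, him, hik])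
    · exact h.2 (by simp [extendMap, hjm, hjk])

lemma snoc_valid (k n : ℕ) (c : Fin n → Color) (hc : Valid k n c) :
    Valid k (n + 1) (Fin.snoc c Color.Empty) := by
  intro i j hlt hle h
  rcases Fin.eq_castSucc_or_eq_last j with ⟨j', rfl⟩ | rfl
  · have hi : i ≠ Fin.last n :=
      Fin.ne_of_lt (hlt.trans (Fin.castSucc_lt_last j'))
    obtain ⟨i', rfl⟩ := Fin.exists_castSucc_eq.2 hi
    refine hc i' j' (by simpa using hlt) (by simpa using hle) ⟨?_, ?_⟩
    · simpa [Fin.snoc_castSucc] using h.1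
    · simpa [Fin.snoc_castSucc] using h.2
  · exact h.2 (by simp)

def bigEquiv (k m : ℕ) :
    {c : Fin (m + k + 1) → Color // Valid k (m + k + 1) c} ≃
      ({c : Fin (m + k) → Color // Valid k (m + k) c} ⊕
        Bool × {c : Fin m → Color // Valid k m c}) where
  toFun := fun ⟨c, hc⟩ =>
    if h : c (Fin.last (m + k)) = Color.Empty then
      .inl ⟨Fin.init c, by
        intro i j hlt hle hp
        exact hc i.castSucc j.castSucc (by simpa using hlt) (by simpa using hle) hp⟩
    else
      .inr (decodeColor (c (Fin.last (m + k))),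
        ⟨fun i => c (Fin.castLE (by omega) i), by
          intro i j hlt hle hp
          exact hc (Fin.castLE (by omega) i) (Fin.castLE (by omega) j) hlt hle hp⟩)
  invFun := Sum.elim
    (fun p => ⟨Fin.snoc p.1 Color.Empty, snoc_valid k (m + k) p.1 p.2⟩)
    (fun q => ⟨extendMap k m q.1 q.2.1, extendMap_valid k m q.1 q.2.1 q.2.2⟩)
  left_inv := by
    rintro ⟨c, hc⟩
    dsimp only
    by_cases h : c (Fin.last (m + k)) = Color.Empty
    · rw [dif_pos h, Sum.elim_inl]
      apply Subtype.ext
      dsimp only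
      conv_rhs => rw [← Fin.snoc_init_self c]
      rw [h]
    · rw [dif_neg h, Sum.elim_inr]
      apply Subtype.ext
      dsimp only
      funext i
      have hilt := i.isLt
      by_cases hi : (i : ℕ) < m
      · have heq : Fin.castLE (by omega : m ≤ m + k + 1) ⟨(i : ℕ), hi⟩ = i := by
          apply Fin.ext; rfl
        simp [extendMap, hi, heq]
      · by_cases hik : (i : ℕ) = m + k
        · have hil : i = Fin.last (m + k) := Fin.ext hik
          rw [hil]
          simp [extendMap, hi, hik, colorOf_decode _ h]
        · have hie : c i = Color.Empty := by
            by_contra hne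
            have hlt : i < Fin.last (m + k) := by
              rw [Fin.lt_def]; simp only [Fin.val_last]; omega
            exact hc i (Fin.last (m + k)) hlt
              (by simp only [Fin.val_last]; omega) ⟨hne, h⟩
          simp [extendMap, hi, hik, hie]
  right_inv := by
    rintro (⟨c, hc⟩ | ⟨b, c, hc⟩)
    · rw [Sum.elim_inl]
      dsimp only
      have hsl : (Fin.snoc c Color.Empty : Fin (m + k + 1) → Color) (Fin.last (m + k)) =
          Color.Empty := by simp
      rw [dif_pos hsl]
      exact congrArg Sum.inl (Subtype.ext (by dsimp only; simp))
    · rw [Sum.elim_inr]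
      dsimp only
      have hlast : extendMap k m b c (Fin.last (m + k)) = colorOf b := by
        simp [extendMap]
      rw [dif_neg (by rw [hlast]; exact colorOf_ne_empty b)]
      simp only [Sum.inr.injEq, Prod.mk.injEq, Subtype.mk.injEq]
      refine ⟨by rw [hlast, decode_colorOf], funext fun i => ?_⟩
      have hi : ((Fin.castLE (by omega : m ≤ m + k + 1) i : Fin (m + k + 1)) : ℕ) < m :=
        i.isLt
      simp [extendMap, hi]

lemma part2 (k m : ℕ) :
    enCisPath k (m + k + 1) = enCisPath k (m + k) + 2 * enCisPath k m := by
  rw [enCisPath_eq, enCisPath_eq, enCisPath_eq, Fintype.card_congr (bigEquiv k m),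
    Fintype.card_sum, Fintype.card_prod, Fintype.card_bool]

end EnCisAux

theorem enCisPath_recursion (k : ℕ) (hk : 1 ≤ k) :
    (∀ n : ℕ, n ≤ k → enCisPath k n = 2 * n + 1) ∧
    (∀ n : ℕ, k < n →
      enCisPath k n = enCisPath k (n - 1) + 2 * enCisPath k (n - k - 1)) := by
  constructor
  · exact fun n hn => EnCisAux.part1 k n hn
  · intro n hn
    obtain ⟨m, rfl⟩ : ∃ m, n = m + k + 1 := ⟨n - k - 1, by omega⟩
    have e1 : m + k + 1 - 1 = m + k := by omega
    have e2 : m + k + 1 - k - 1 = m := by omega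
    rw [e1, e2]
    exact EnCisAux.part2 k m
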